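/- Every subgroup of finite index in an invariantly finitely L-presented group is finitely L-presented. -/

import Mathlib

/-- The kernel of a finite `L`-presentation: the normal closure in the free group of
`Q ∪ ⋃_{σ ∈ Φ*} σ(R)`, where `Φ*` is the submonoid of `End(F)` generated by `Φ`. -/
def lpresKernel {X : Type} (Q R : Set (FreeGroup X))
    (Φ : Set (Monoid.End (FreeGroup X))) : Subgroup (FreeGroup X) :=
  Subgroup.normalClosure (Q ∪ ⋃ σ ∈ Submonoid.closure Φ, ⇑σ '' R)

instance lpresKernel_normal {X : Type} (Q R : Set (FreeGroup X))
    (Φ : Set (Monoid.End (FreeGroup X))) : (lpresKernel Q R Φ).Normal :=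
  Subgroup.normalClosure_normal

/-- A group is finitely `L`-presented if it is isomorphic to the group presented by a
finite `L`-presentation `(X, Q, Φ, R)`. -/
def IsFinitelyLPresented (G : Type*) [Group G] : Prop :=
  ∃ (n : ℕ) (Q R : Finset (FreeGroup (Fin n)))
    (Φ : Finset (Monoid.End (FreeGroup (Fin n)))),
    Nonempty (G ≃* FreeGroup (Fin n) ⧸ lpresKernel (Q : Set _) (R : Set _) (Φ : Set _))

/-- A group is invariantly finitely `L`-presented if it admits a finite `L`-presentation
`(X, Q, Φ, R)` such that each `σ ∈ Φ` leaves the kernel `N` invariant. -/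
def IsInvariantlyFinitelyLPresented (G : Type*) [Group G] : Prop :=
  ∃ (n : ℕ) (Q R : Finset (FreeGroup (Fin n)))
    (Φ : Finset (Monoid.End (FreeGroup (Fin n)))),
    (∀ σ ∈ Φ, ∀ g ∈ lpresKernel (Q : Set _) (R : Set _) (Φ : Set _),
        σ g ∈ lpresKernel (Q : Set _) (R : Set _) (Φ : Set _)) ∧
    Nonempty (G ≃* FreeGroup (Fin n) ⧸ lpresKernel (Q : Set _) (R : Set _) (Φ : Set _))


open Subgroup

/-- A finitely generated group with a free group basis has finite basis. -/
lemma FreeGroupBasis.finite_of_fg {G : Type*} [Group G] [Group.FG G] {ι : Type*}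
    (b : FreeGroupBasis ι G) : Finite ι := by
  have hsurj : Function.Surjective b.repr.toMonoidHom := b.repr.surjective
  haveI : Group.FG (FreeGroup ι) := Group.fg_of_surjective hsurj
  haveI : Group.FG (Abelianization (FreeGroup ι)) :=
    Group.fg_of_surjective (f := Abelianization.of (G := FreeGroup ι))
      (fun x => Quotient.exists_rep x)
  haveI : AddGroup.FG (FreeAbelianGroup ι) :=
    AddGroup.fg_of_group_fg (G := Abelianization (FreeGroup ι))
  haveI : AddGroup.FG (ι →₀ ℤ) :=
    AddGroup.fg_of_surjective (f := (FreeAbelianGroup.equivFinsupp ι).toAddMonoidHom)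
      (FreeAbelianGroup.equivFinsupp ι).surjective
  haveI : Module.Finite ℤ (ι →₀ ℤ) := Module.Finite.iff_addGroup_fg.mpr ‹_›
  exact Module.Finite.finite_basis (Finsupp.basisSingleOne (R := ℤ) (ι := ι))

lemma exists_mulEquiv_freeGroup_fin (H : Type) [Group H] [IsFreeGroup H] [Group.FG H] :
    ∃ (m : ℕ), Nonempty (FreeGroup (Fin m) ≃* H) := by
  obtain ⟨ι, ⟨b⟩⟩ := IsFreeGroup.nonempty_basis (G := H)
  haveI : Finite ι := b.finite_of_fg
  haveI : Fintype ι := Fintype.ofFinite ι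
  refine ⟨Fintype.card ι, ⟨?_⟩⟩
  exact (FreeGroup.freeGroupCongr (Fintype.equivFin ι)).symm.trans b.repr.symm

/-- Conjugation of endomorphisms of free groups along an isomorphism, as a monoid hom. -/
def endCongr {A B : Type} (c : FreeGroup A ≃* FreeGroup B) :
    Monoid.End (FreeGroup A) →* Monoid.End (FreeGroup B) where
  toFun σ := (c.toMonoidHom.comp σ).comp c.symm.toMonoidHom
  map_one' := MonoidHom.ext fun x => by
    show c (c.symm x) = x
    simp
  map_mul' σ τ := MonoidHom.ext fun x => by
    show c (σ (τ (c.symm x))) = c (σ (c.symm (c (τ (c.symm x)))))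
    rw [MulEquiv.symm_apply_apply]

lemma lpresKernel_map {A B : Type} (c : FreeGroup A ≃* FreeGroup B)
    (Q R : Set (FreeGroup A)) (Φ : Set (Monoid.End (FreeGroup A))) :
    (lpresKernel Q R Φ).map c.toMonoidHom
      = lpresKernel (⇑c '' Q) (⇑c '' R) (endCongr c '' Φ) := by
  have key : ∀ σ : Monoid.End (FreeGroup A),
      ⇑(endCongr c σ) '' (⇑c '' R) = ⇑c '' (⇑σ '' R) := by
    intro σ
    rw [← Set.image_comp, ← Set.image_comp]
    apply Set.image_congr'
    intro r
    show c (σ (c.symm (c r))) = c (σ r)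
    rw [MulEquiv.symm_apply_apply]
  unfold lpresKernel
  rw [Subgroup.map_normalClosure _ _ c.surjective]
  congr 1
  rw [Set.image_union]
  congr 1
  rw [Set.image_iUnion₂]
  ext x
  rw [Set.mem_iUnion₂, Set.mem_iUnion₂]
  constructor
  · rintro ⟨σ, hσ, hx⟩
    refine ⟨endCongr c σ, ?_, ?_⟩
    · rw [← MonoidHom.map_mclosure]
      exact Submonoid.mem_map_of_mem _ hσ
    · rw [key]; exact hx
  · rintro ⟨σ', hσ', hx⟩
    rw [← MonoidHom.map_mclosure] at hσ'
    obtain ⟨σ, hσ, rfl⟩ := Submonoid.mem_map.mp hσ'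
    rw [key] at hx
    exact ⟨σ, hσ, hx⟩

lemma isFinitelyLPresented_of {H : Type*} [Group H] {B : Type} [Fintype B]
    (Q R : Finset (FreeGroup B)) (Φ : Finset (Monoid.End (FreeGroup B)))
    (h : Nonempty (H ≃* FreeGroup B ⧸ lpresKernel (Q : Set _) (R : Set _) (Φ : Set _))) :
    IsFinitelyLPresented H := by
  classical
  obtain ⟨eq⟩ := h
  set c := FreeGroup.freeGroupCongr (Fintype.equivFin B)
  refine ⟨Fintype.card B, Q.image c, R.image c, Φ.image (endCongr c), ⟨?_⟩⟩
  have hmap : (lpresKernel (Q : Set _) (R : Set _) (Φ : Set _)).map c.toMonoidHom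
      = lpresKernel ((Q.image c : Finset _) : Set _) ((R.image c : Finset _) : Set _)
        ((Φ.image (endCongr c) : Finset _) : Set _) := by
    rw [lpresKernel_map]
    simp [Finset.coe_image]
  exact eq.trans (QuotientGroup.congr _ _ c hmap)

section EndOfAux

variable {X : Type} {mZ : ℕ} (mY : ℕ) (Wb : Subgroup (FreeGroup X))
  (eZ : FreeGroup (Fin mZ) ≃* ↥Wb)

/-- The endomorphism of the big free group induced by an endomorphism of the ambient
free group preserving `Wb`. -/
noncomputable def endOfAux (ψ : FreeGroup X →* FreeGroup X) (hψ : ∀ w ∈ Wb, ψ w ∈ Wb) :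
    Monoid.End (FreeGroup (Fin mY ⊕ Fin mZ)) :=
  FreeGroup.lift (Sum.elim (fun _ => 1)
    (fun z => (FreeGroup.map Sum.inr)
      (eZ.symm ⟨ψ ↑(eZ (FreeGroup.of z)), hψ _ (eZ (FreeGroup.of z)).2⟩)))

lemma endOfAux_comp_inr (ψ : FreeGroup X →* FreeGroup X) (hψ : ∀ w ∈ Wb, ψ w ∈ Wb) :
    (endOfAux mY Wb eZ ψ hψ : _ →* _).comp (FreeGroup.map Sum.inr)
      = (FreeGroup.map Sum.inr : FreeGroup (Fin mZ) →* FreeGroup (Fin mY ⊕ Fin mZ)).comp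
        ((eZ.symm.toMonoidHom).comp
          (((ψ.comp Wb.subtype).codRestrict Wb (fun w => hψ _ w.2)).comp eZ.toMonoidHom)) := by
  apply FreeGroup.ext_hom
  intro z
  simp only [MonoidHom.comp_apply, FreeGroup.map.of]
  show endOfAux mY Wb eZ ψ hψ (FreeGroup.of (Sum.inr z)) = _
  erw [endOfAux, FreeGroup.lift_apply_of]
  rfl

lemma endOfAux_apply_inr (ψ : FreeGroup X →* FreeGroup X) (hψ : ∀ w ∈ Wb, ψ w ∈ Wb)
    (w : ↥Wb) :
    endOfAux mY Wb eZ ψ hψ (FreeGroup.map Sum.inr (eZ.symm w))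
      = FreeGroup.map Sum.inr (eZ.symm ⟨ψ ↑w, hψ _ w.2⟩) := by
  have h := DFunLike.congr_fun (endOfAux_comp_inr mY Wb eZ ψ hψ) (eZ.symm w)
  simp only [MonoidHom.comp_apply] at h
  refine h.trans ?_
  apply congrArg
  show eZ.symm (((ψ.comp Wb.subtype).codRestrict Wb (fun w => hψ _ w.2)) (eZ (eZ.symm w)))
      = eZ.symm ⟨ψ ↑w, hψ _ w.2⟩
  apply congrArg
  apply Subtype.ext
  show ψ ((Wb.subtype) (eZ (eZ.symm w))) = ψ ↑w
  rw [MulEquiv.apply_symm_apply]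
  rfl

end EndOfAux

lemma isFinitelyLPresented_of_mulEquiv {H K : Type*} [Group H] [Group K] (e : H ≃* K)
    (hK : IsFinitelyLPresented K) : IsFinitelyLPresented H := by
  obtain ⟨n, Q, R, Φ, ⟨eq⟩⟩ := hK
  exact ⟨n, Q, R, Φ, ⟨e.trans eq⟩⟩

lemma main_aux {X : Type} [Fintype X] (Q R : Finset (FreeGroup X))
    (Φ : Finset (Monoid.End (FreeGroup X)))
    {N : Subgroup (FreeGroup X)} [hNnormal : N.Normal]
    (hN : N = lpresKernel (Q : Set _) (R : Set _) (Φ : Set _))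
    (hinv : ∀ σ ∈ Φ, ∀ g ∈ N, (σ : Monoid.End (FreeGroup X)) g ∈ N)
    (V' : Subgroup (FreeGroup X ⧸ N)) (hV' : V'.FiniteIndex) :
    IsFinitelyLPresented ↥V' := by
  classical
  set π : FreeGroup X →* FreeGroup X ⧸ N := QuotientGroup.mk' N with hπdef
  have hπ : Function.Surjective π := QuotientGroup.mk'_surjective N
  have hQN : ∀ q ∈ Q, q ∈ N := by
    intro q hq
    rw [hN]
    exact Subgroup.subset_normalClosure (Or.inl hq)
  have hRN : ∀ r ∈ R, r ∈ N := by
    intro r hr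
    rw [hN]
    apply Subgroup.subset_normalClosure
    right
    exact Set.mem_iUnion₂.mpr ⟨1, Submonoid.one_mem _, ⟨r, hr, rfl⟩⟩
  set Vb : Subgroup (FreeGroup X) := V'.comap π with hVb
  haveI hVbfi : Vb.FiniteIndex := by
    constructor
    rw [hVb, Subgroup.index_comap_of_surjective _ hπ]
    exact hV'.index_ne_zero
  have hNVb : N ≤ Vb := by
    intro x hx
    show π x ∈ V'
    have h1 : π x = 1 := (QuotientGroup.eq_one_iff x).mpr hx
    rw [h1]; exact V'.one_mem
  haveI hFfg : Group.FG (FreeGroup X) := by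
    rw [Group.fg_iff]
    exact ⟨Set.range FreeGroup.of, FreeGroup.closure_range_of _, Set.finite_range _⟩
  haveI : Finite (FreeGroup X ⧸ Vb) := Vb.finite_quotient_of_finiteIndex
  haveI : Finite (FreeGroup X →* Equiv.Perm (FreeGroup X ⧸ Vb)) :=
    Finite.of_equiv _ (FreeGroup.lift : (X → Equiv.Perm (FreeGroup X ⧸ Vb)) ≃ _)
  -- the invariant finite-index normal subgroup
  set Wb : Subgroup (FreeGroup X) :=
    ⨅ f : {f : FreeGroup X →* Equiv.Perm (FreeGroup X ⧸ Vb) // N ≤ f.ker}, (f : _).1.ker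
    with hWbdef
  haveI hWbfi : Wb.FiniteIndex := Subgroup.finiteIndex_iInf fun f => inferInstance
  have hNWb : N ≤ Wb := le_iInf fun f => f.2
  haveI hWbnormal : Wb.Normal := by
    constructor
    intro x hx g
    rw [hWbdef, Subgroup.mem_iInf] at hx ⊢
    exact fun f => (MonoidHom.normal_ker f.1).conj_mem x (hx f) g
  have hWbVb : Wb ≤ Vb := by
    have hNf : N ≤ (MulAction.toPermHom (FreeGroup X) (FreeGroup X ⧸ Vb)).ker := by
      rw [← Subgroup.normalCore_eq_ker]
      exact Subgroup.normal_le_normalCore.mpr hNVb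
    calc Wb ≤ (MulAction.toPermHom (FreeGroup X) (FreeGroup X ⧸ Vb)).ker :=
          iInf_le _ (⟨_, hNf⟩ : {f : FreeGroup X →* Equiv.Perm (FreeGroup X ⧸ Vb) // N ≤ f.ker})
      _ = Vb.normalCore := (Subgroup.normalCore_eq_ker Vb).symm
      _ ≤ Vb := Subgroup.normalCore_le Vb
  have hWbσ : ∀ σ ∈ Φ, ∀ w ∈ Wb, (σ : Monoid.End (FreeGroup X)) w ∈ Wb := by
    intro σ hσ w hw
    rw [hWbdef, Subgroup.mem_iInf]
    rintro ⟨f, hf⟩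
    have hker : N ≤ (f.comp (σ : FreeGroup X →* FreeGroup X)).ker := by
      intro x hx
      have : σ x ∈ N := hinv σ hσ x hx
      exact hf this
    have := (Subgroup.mem_iInf.mp hw) ⟨f.comp (σ : FreeGroup X →* FreeGroup X), hker⟩
    exact this
  -- free group bases
  haveI : Group.FG ↥Vb := Subgroup.fg_of_index_ne_zero Vb
  haveI : Group.FG ↥Wb := Subgroup.fg_of_index_ne_zero Wb
  obtain ⟨mY, ⟨eY⟩⟩ := exists_mulEquiv_freeGroup_fin ↥Vb
  obtain ⟨mZ, ⟨eZ⟩⟩ := exists_mulEquiv_freeGroup_fin ↥Wb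
  -- the big free group E := FreeGroup (Fin mY ⊕ Fin mZ)
  obtain ⟨π₂, hπ₂Y, hπ₂Z, hmemVb⟩ :
      ∃ π₂ : FreeGroup (Fin mY ⊕ Fin mZ) →* FreeGroup X,
        (∀ x : FreeGroup (Fin mY), π₂ (FreeGroup.map Sum.inl x) = ↑(eY x)) ∧
        (∀ x : FreeGroup (Fin mZ), π₂ (FreeGroup.map Sum.inr x) = ↑(eZ x)) ∧
        (∀ x, π₂ x ∈ Vb) := by
    set p2 : FreeGroup (Fin mY ⊕ Fin mZ) →* FreeGroup X := FreeGroup.lift (Sum.elim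
      (fun y => ((eY (FreeGroup.of y) : ↥Vb) : FreeGroup X))
      (fun z => ((eZ (FreeGroup.of z) : ↥Wb) : FreeGroup X))) with hp2
    have hY : p2.comp (FreeGroup.map Sum.inl) = Vb.subtype.comp eY.toMonoidHom := by
      apply FreeGroup.ext_hom
      intro y
      rw [hp2]
      simp [FreeGroup.map.of, FreeGroup.lift_apply_of]
    have hZ : p2.comp (FreeGroup.map Sum.inr) = Wb.subtype.comp eZ.toMonoidHom := by
      apply FreeGroup.ext_hom
      intro z
      rw [hp2]
      simp [FreeGroup.map.of, FreeGroup.lift_apply_of]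
    refine ⟨p2, fun x => DFunLike.congr_fun hY x, fun x => DFunLike.congr_fun hZ x, ?_⟩
    intro x
    have hsub : (⊤ : Subgroup (FreeGroup (Fin mY ⊕ Fin mZ))) ≤ Vb.comap p2 := by
      rw [← FreeGroup.closure_range_of, Subgroup.closure_le]
      rintro _ ⟨a, rfl⟩
      rcases a with y | z
      · show p2 (FreeGroup.of (Sum.inl y)) ∈ Vb
        rw [hp2, FreeGroup.lift_apply_of]
        exact (eY (FreeGroup.of y)).2
      · show p2 (FreeGroup.of (Sum.inr z)) ∈ Vb
        rw [hp2, FreeGroup.lift_apply_of]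
        exact hWbVb (eZ (FreeGroup.of z)).2
    exact hsub (Subgroup.mem_top x)
  have hrange : ∀ v ∈ Vb, ∃ x, π₂ x = v := by
    intro v hv
    refine ⟨FreeGroup.map Sum.inl (eY.symm ⟨v, hv⟩), ?_⟩
    rw [hπ₂Y, MulEquiv.apply_symm_apply]
  -- transversal
  haveI : Fintype (FreeGroup X ⧸ Vb) := Fintype.ofFinite _
  obtain ⟨tOf, htOf⟩ : ∃ tOf : (FreeGroup X ⧸ Vb) → FreeGroup X,
      ∀ f : FreeGroup X, f * (tOf (QuotientGroup.mk f⁻¹))⁻¹ ∈ Vb := by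
    refine ⟨fun c => (Quotient.out c)⁻¹, fun f => ?_⟩
    have h1 : (QuotientGroup.mk (Quotient.out ((QuotientGroup.mk (f⁻¹ : FreeGroup X)) :
        FreeGroup X ⧸ Vb)) : FreeGroup X ⧸ Vb) = QuotientGroup.mk f⁻¹ :=
      QuotientGroup.out_eq' _
    have h2 := QuotientGroup.eq.mp h1
    have h3 := Vb.inv_mem h2
    simpa [mul_inv_rev] using h3
  have hconjN : ∀ (t x : FreeGroup X), x ∈ N → t * x * t⁻¹ ∈ N :=
    fun t x hx => hNnormal.conj_mem x hx t
  have hconjW : ∀ t : FreeGroup X, ∀ w ∈ Wb, (MulAut.conj t).toMonoidHom w ∈ Wb := by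
    intro t w hw
    simpa using hWbnormal.conj_mem w hw t
  -- the finite L-presentation data
  set Qhat : Finset (FreeGroup (Fin mY ⊕ Fin mZ)) :=
    ((Finset.univ : Finset (Fin mZ)).image fun z =>
        FreeGroup.of (Sum.inr z) *
          (FreeGroup.map Sum.inl (eY.symm (Subgroup.inclusion hWbVb (eZ (FreeGroup.of z)))))⁻¹)
      ∪ ((Finset.univ ×ˢ Q.attach).image
          fun (p : (FreeGroup X ⧸ Vb) × {x // x ∈ Q}) =>
          FreeGroup.map Sum.inr (eZ.symm ⟨tOf p.1 * p.2.1 * (tOf p.1)⁻¹,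
            hNWb (hconjN _ _ (hQN _ p.2.2))⟩)) with hQhatdef
  set Rhat : Finset (FreeGroup (Fin mY ⊕ Fin mZ)) :=
    R.attach.image (fun (r : {x // x ∈ R}) =>
      FreeGroup.map Sum.inr (eZ.symm ⟨r.1, hNWb (hRN _ r.2)⟩)) with hRhatdef
  set Φhat : Finset (Monoid.End (FreeGroup (Fin mY ⊕ Fin mZ))) :=
    (Φ.attach.image fun (σ : {x // x ∈ Φ}) => endOfAux mY Wb eZ σ.1 (hWbσ σ.1 σ.2))
      ∪ ((Finset.univ : Finset (FreeGroup X ⧸ Vb)).image fun c =>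
          endOfAux mY Wb eZ (MulAut.conj (tOf c)).toMonoidHom (hconjW (tOf c))) with hΦhatdef
  -- membership characterizations
  have hQhat_mem1 : ∀ z : Fin mZ,
      FreeGroup.of (Sum.inr z) *
        (FreeGroup.map Sum.inl (eY.symm (Subgroup.inclusion hWbVb (eZ (FreeGroup.of z)))))⁻¹
        ∈ Qhat := by
    intro z
    rw [hQhatdef]
    exact Finset.mem_union_left _ (Finset.mem_image.mpr ⟨z, Finset.mem_univ z, rfl⟩)
  have hQhat_mem2 : ∀ (c : FreeGroup X ⧸ Vb) (q : FreeGroup X) (hq : q ∈ Q),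
      ∃ w : ↥Wb, (↑w : FreeGroup X) = tOf c * q * (tOf c)⁻¹ ∧
        FreeGroup.map Sum.inr (eZ.symm w) ∈ Qhat := by
    intro c q hq
    refine ⟨⟨tOf c * q * (tOf c)⁻¹, hNWb (hconjN _ _ (hQN _ hq))⟩, rfl, ?_⟩
    rw [hQhatdef]
    refine Finset.mem_union_right _ (Finset.mem_image.mpr ⟨⟨c, ⟨q, hq⟩⟩, ?_, rfl⟩)
    exact Finset.mem_product.mpr ⟨Finset.mem_univ _, Finset.mem_attach _ _⟩
  have hQhat_mem' : ∀ x ∈ Qhat, π₂ x ∈ N := by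
    intro x hx
    rw [hQhatdef, Finset.mem_union] at hx
    rcases hx with hx | hx
    · obtain ⟨z, _, rfl⟩ := Finset.mem_image.mp hx
      rw [map_mul, map_inv, hπ₂Y]
      have h1 : π₂ (FreeGroup.of (Sum.inr z)) = ↑(eZ (FreeGroup.of z)) := by
        have := hπ₂Z (FreeGroup.of (Fin.cast rfl z))
        simpa [FreeGroup.map.of] using hπ₂Z (FreeGroup.of z)
      rw [h1, MulEquiv.apply_symm_apply]
      have h2 : ((Subgroup.inclusion hWbVb (eZ (FreeGroup.of z)) : ↥Vb) : FreeGroup X)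
          = ↑(eZ (FreeGroup.of z)) := rfl
      rw [h2, mul_inv_cancel]
      exact N.one_mem
    · obtain ⟨p, _, rfl⟩ := Finset.mem_image.mp hx
      rw [hπ₂Z, MulEquiv.apply_symm_apply]
      exact hconjN _ _ (hQN _ p.2.2)
  have hRhat_mem : ∀ r ∈ R, ∃ w : ↥Wb, (↑w : FreeGroup X) = r ∧
      FreeGroup.map Sum.inr (eZ.symm w) ∈ Rhat := by
    intro r hr
    refine ⟨⟨r, hNWb (hRN _ hr)⟩, rfl, ?_⟩
    rw [hRhatdef]
    exact Finset.mem_image.mpr ⟨⟨r, hr⟩, Finset.mem_attach _ _, rfl⟩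
  have hRhat_mem' : ∀ x ∈ Rhat, ∃ w : ↥Wb, (↑w : FreeGroup X) ∈ N ∧
      x = FreeGroup.map Sum.inr (eZ.symm w) := by
    intro x hx
    rw [hRhatdef] at hx
    obtain ⟨r, _, rfl⟩ := Finset.mem_image.mp hx
    exact ⟨⟨r.1, hNWb (hRN _ r.2)⟩, hRN _ r.2, rfl⟩
  have hΦhat_mem1 : ∀ σ (hσ : σ ∈ Φ),
      endOfAux mY Wb eZ (σ : Monoid.End (FreeGroup X)) (hWbσ σ hσ) ∈ Φhat := by
    intro σ hσ
    rw [hΦhatdef]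
    exact Finset.mem_union_left _
      (Finset.mem_image.mpr ⟨⟨σ, hσ⟩, Finset.mem_attach _ _, rfl⟩)
  have hΦhat_mem2 : ∀ c : FreeGroup X ⧸ Vb,
      endOfAux mY Wb eZ (MulAut.conj (tOf c)).toMonoidHom (hconjW (tOf c)) ∈ Φhat := by
    intro c
    rw [hΦhatdef]
    exact Finset.mem_union_right _ (Finset.mem_image.mpr ⟨c, Finset.mem_univ _, rfl⟩)
  have hΦhat_mem' : ∀ μ ∈ Φhat, ∃ (ψ : FreeGroup X →* FreeGroup X)
      (hψ : ∀ w ∈ Wb, ψ w ∈ Wb), (∀ v ∈ N, ψ v ∈ N) ∧ μ = endOfAux mY Wb eZ ψ hψ := by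
    intro μ hμ
    rw [hΦhatdef, Finset.mem_union] at hμ
    rcases hμ with hμ | hμ
    · obtain ⟨σ, _, rfl⟩ := Finset.mem_image.mp hμ
      exact ⟨σ.1, hWbσ σ.1 σ.2, hinv σ.1 σ.2, rfl⟩
    · obtain ⟨c, _, rfl⟩ := Finset.mem_image.mp hμ
      refine ⟨(MulAut.conj (tOf c)).toMonoidHom, hconjW (tOf c), ?_, rfl⟩
      intro v hv
      simpa using hconjN (tOf c) v hv
  -- the kernels
  set L : Subgroup (FreeGroup (Fin mY ⊕ Fin mZ)) :=
    lpresKernel (Qhat : Set _) (Rhat : Set _) (Φhat : Set _) with hLdef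
  haveI hLnormal : L.Normal := hLdef ▸ lpresKernel_normal _ _ _
  set K : Subgroup (FreeGroup (Fin mY ⊕ Fin mZ)) := N.comap π₂ with hKdef
  haveI hKnormal : K.Normal := Subgroup.Normal.comap hNnormal π₂
  have hQhatL : ∀ x ∈ Qhat, x ∈ L := by
    intro x hx
    rw [hLdef]
    exact Subgroup.subset_normalClosure (Or.inl hx)
  have hML : ∀ μ ∈ Submonoid.closure (Φhat : Set (Monoid.End (FreeGroup (Fin mY ⊕ Fin mZ)))),
      ∀ r ∈ Rhat, μ r ∈ L := by
    intro μ hμ r hr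
    rw [hLdef]
    apply Subgroup.subset_normalClosure
    right
    exact Set.mem_iUnion₂.mpr ⟨μ, hμ, ⟨r, hr, rfl⟩⟩
  -- invariance of the "Wb ∩ N picture" under the closure of Φhat
  have hD : ∀ μ ∈ Submonoid.closure (Φhat : Set (Monoid.End (FreeGroup (Fin mY ⊕ Fin mZ)))),
      ∀ x : FreeGroup (Fin mY ⊕ Fin mZ),
      (∃ w : ↥Wb, (↑w : FreeGroup X) ∈ N ∧ x = FreeGroup.map Sum.inr (eZ.symm w)) →
      ∃ w : ↥Wb, (↑w : FreeGroup X) ∈ N ∧ μ x = FreeGroup.map Sum.inr (eZ.symm w) := by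
    intro μ hμ
    induction hμ using Submonoid.closure_induction with
    | mem ν hν =>
      rintro x ⟨w, hwN, rfl⟩
      obtain ⟨ψ, hψ, hψN, rfl⟩ := hΦhat_mem' ν hν
      exact ⟨⟨ψ ↑w, hψ _ w.2⟩, hψN _ hwN, endOfAux_apply_inr mY Wb eZ ψ hψ w⟩
    | one =>
      rintro x ⟨w, h1, rfl⟩
      exact ⟨w, h1, rfl⟩
    | mul μ₁ μ₂ h₁ h₂ ih₁ ih₂ =>
      intro x hx
      obtain ⟨w, hwN, h⟩ := ih₂ x hx
      obtain ⟨w', hwN', h'⟩ := ih₁ _ ⟨w, hwN, rfl⟩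
      refine ⟨w', hwN', ?_⟩
      show μ₁ (μ₂ x) = _
      rw [h, h']
  -- L ≤ K
  have hLK : L ≤ K := by
    rw [hLdef]
    apply Subgroup.normalClosure_le_normal
    intro x hx
    rcases hx with hx | hx
    · show x ∈ K
      rw [hKdef, Subgroup.mem_comap]
      exact hQhat_mem' x hx
    · rw [Set.mem_iUnion₂] at hx
      obtain ⟨μ, hμ, hx⟩ := hx
      obtain ⟨y, hy, rfl⟩ := hx
      obtain ⟨w, hwN, rfl⟩ := hRhat_mem' y hy
      obtain ⟨w', hwN', heq⟩ := hD μ hμ _ ⟨w, hwN, rfl⟩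
      show _ ∈ K
      rw [hKdef, Subgroup.mem_comap, heq, hπ₂Z, MulEquiv.apply_symm_apply]
      exact hwN'
  -- inverse-flip helper in L
  have hflip : ∀ a b : FreeGroup (Fin mY ⊕ Fin mZ), a * b⁻¹ ∈ L → a⁻¹ * b ∈ L := by
    intro a b h
    have h2 := L.inv_mem h
    have h3 := hLnormal.conj_mem _ h2 a⁻¹
    simpa [mul_assoc] using h3
  -- the kernel of π₂ is contained in L
  have hkerπ₂ : ∀ x, π₂ x = 1 → x ∈ L := by
    have hχprop : ∃ χ : FreeGroup (Fin mY ⊕ Fin mZ) →* FreeGroup (Fin mY),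
        (∀ u, π₂ u = ↑(eY (χ u))) ∧
        (∀ u, (QuotientGroup.mk u : FreeGroup (Fin mY ⊕ Fin mZ) ⧸ L)
            = QuotientGroup.mk (FreeGroup.map Sum.inl (χ u))) := by
      refine ⟨FreeGroup.lift (Sum.elim
        (fun y => FreeGroup.of y)
        (fun z => eY.symm (Subgroup.inclusion hWbVb (eZ (FreeGroup.of z))))), ?_, ?_⟩
      · intro u
        have hhom : π₂ = (Vb.subtype.comp eY.toMonoidHom).comp
            (FreeGroup.lift (Sum.elim (fun y => FreeGroup.of y)
              (fun z => eY.symm (Subgroup.inclusion hWbVb (eZ (FreeGroup.of z)))))) := by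
          apply FreeGroup.ext_hom
          rintro (y | z)
          · show π₂ (FreeGroup.of (Sum.inl y)) = _
            rw [show (FreeGroup.of (Sum.inl y) : FreeGroup (Fin mY ⊕ Fin mZ))
                = FreeGroup.map Sum.inl (FreeGroup.of y) from (FreeGroup.map.of).symm, hπ₂Y]
            simp [FreeGroup.lift_apply_of]
          · show π₂ (FreeGroup.of (Sum.inr z)) = _
            rw [show (FreeGroup.of (Sum.inr z) : FreeGroup (Fin mY ⊕ Fin mZ))
                = FreeGroup.map Sum.inr (FreeGroup.of z) from (FreeGroup.map.of).symm, hπ₂Z]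
            simp [FreeGroup.lift_apply_of]
        exact DFunLike.congr_fun hhom u
      · intro u
        have hhom : (QuotientGroup.mk' L) = (QuotientGroup.mk' L).comp
            ((FreeGroup.map Sum.inl).comp (FreeGroup.lift (Sum.elim (fun y => FreeGroup.of y)
              (fun z => eY.symm (Subgroup.inclusion hWbVb (eZ (FreeGroup.of z))))))) := by
          apply FreeGroup.ext_hom
          rintro (y | z)
          · simp [FreeGroup.lift_apply_of, FreeGroup.map.of]
          · show QuotientGroup.mk (FreeGroup.of (Sum.inr z)) = _
            simp only [MonoidHom.comp_apply, FreeGroup.lift_apply_of, Sum.elim_inr,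
              QuotientGroup.mk'_apply]
            apply (QuotientGroup.eq).mpr
            apply hflip
            exact hQhatL _ (hQhat_mem1 z)
        exact DFunLike.congr_fun hhom u
    obtain ⟨χ, hχ1, hχ2⟩ := hχprop
    intro x hx1
    have h1 : ((eY (χ x) : ↥Vb) : FreeGroup X) = 1 := by rw [← hχ1]; exact hx1
    have h2 : eY (χ x) = 1 := by
      exact_mod_cast h1
    have h3 : χ x = 1 := by
      have := congrArg eY.symm h2
      simpa using this
    have h4 := hχ2 x
    rw [h3, map_one] at h4
    have h5 : (QuotientGroup.mk x : FreeGroup (Fin mY ⊕ Fin mZ) ⧸ L) = 1 := by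
      rw [h4]; rfl
    exact (QuotientGroup.eq_one_iff x).mp h5
  -- lifting the closure of Φ
  have hlift : ∀ μ ∈ Submonoid.closure (Φ : Set (Monoid.End (FreeGroup X))),
      ∃ μhat ∈ Submonoid.closure (Φhat : Set (Monoid.End (FreeGroup (Fin mY ⊕ Fin mZ)))),
      ∀ w : ↥Wb, (↑w : FreeGroup X) ∈ N →
        ∃ w' : ↥Wb, (↑w' : FreeGroup X) = μ ↑w ∧ (↑w' : FreeGroup X) ∈ N ∧
          μhat (FreeGroup.map Sum.inr (eZ.symm w)) = FreeGroup.map Sum.inr (eZ.symm w') := by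
    intro μ hμ
    induction hμ using Submonoid.closure_induction with
    | mem σ hσ =>
      refine ⟨endOfAux mY Wb eZ σ (hWbσ σ hσ), Submonoid.subset_closure (hΦhat_mem1 σ hσ), ?_⟩
      intro w hwN
      exact ⟨⟨σ ↑w, hWbσ σ hσ _ w.2⟩, rfl, hinv σ hσ _ hwN,
        endOfAux_apply_inr mY Wb eZ σ (hWbσ σ hσ) w⟩
    | one =>
      exact ⟨1, Submonoid.one_mem _, fun w hw => ⟨w, rfl, hw, rfl⟩⟩
    | mul μ₁ μ₂ h₁ h₂ ih₁ ih₂ =>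
      obtain ⟨m1, hm1, f1⟩ := ih₁
      obtain ⟨m2, hm2, f2⟩ := ih₂
      refine ⟨m1 * m2, Submonoid.mul_mem _ hm1 hm2, ?_⟩
      intro w hw
      obtain ⟨w2, he2, hN2, hmap2⟩ := f2 w hw
      obtain ⟨w1, he1, hN1, hmap1⟩ := f1 w2 hN2
      refine ⟨w1, ?_, hN1, ?_⟩
      · rw [he1, he2]; rfl
      · show m1 (m2 _) = _
        rw [hmap2, hmap1]
  -- every element of N is the image of an element of L
  have hNmap : ∀ v ∈ N, ∃ x ∈ L, π₂ x = v := by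
    have hsub : N ≤ Subgroup.map π₂ L := by
      rw [hN]
      show Subgroup.closure _ ≤ _
      rw [Subgroup.closure_le]
      intro x hx
      obtain ⟨s, hs, hconj⟩ := Group.mem_conjugatesOfSet_iff.mp hx
      obtain ⟨f, hf⟩ := isConj_iff.mp hconj
      -- decomposition f = v * t
      have hv : f * (tOf (QuotientGroup.mk f⁻¹))⁻¹ ∈ Vb := htOf f
      obtain ⟨xv, hxv⟩ := hrange _ hv
      -- find g ∈ L with π₂ g = t * s * t⁻¹
      have hg : ∃ g ∈ L, π₂ g = tOf (QuotientGroup.mk f⁻¹) * s * (tOf (QuotientGroup.mk f⁻¹))⁻¹ := by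
        rcases hs with hsQ | hsR
        · obtain ⟨w, hw1, hw2⟩ := hQhat_mem2 (QuotientGroup.mk f⁻¹) s hsQ
          refine ⟨_, hQhatL _ hw2, ?_⟩
          rw [hπ₂Z, MulEquiv.apply_symm_apply, hw1]
        · rw [Set.mem_iUnion₂] at hsR
          obtain ⟨μ, hμ, hsR⟩ := hsR
          obtain ⟨r, hr, rfl⟩ := hsR
          obtain ⟨μhat, hμhat, hprop⟩ := hlift μ hμ
          obtain ⟨w, hw1, hw2⟩ := hRhat_mem r hr
          have hwN : (↑w : FreeGroup X) ∈ N := by rw [hw1]; exact hRN r hr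
          obtain ⟨w', he', hN', hmap'⟩ := hprop w hwN
          set t := tOf (QuotientGroup.mk f⁻¹) with htdef
          set chat := endOfAux mY Wb eZ (MulAut.conj t).toMonoidHom (hconjW t) with hchatdef
          refine ⟨chat (μhat (FreeGroup.map Sum.inr (eZ.symm w))), ?_, ?_⟩
          · have : chat (μhat (FreeGroup.map Sum.inr (eZ.symm w)))
                = (chat * μhat) (FreeGroup.map Sum.inr (eZ.symm w)) := rfl
            rw [this]
            apply hML
            · exact Submonoid.mul_mem _
                (Submonoid.subset_closure (hΦhat_mem2 (QuotientGroup.mk f⁻¹))) hμhat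
            · exact hw2
          · rw [hmap', endOfAux_apply_inr mY Wb eZ (MulAut.conj t).toMonoidHom (hconjW t) w',
              hπ₂Z, MulEquiv.apply_symm_apply]
            show (MulAut.conj t).toMonoidHom ↑w' = _
            rw [he', hw1]
            simp [MulAut.conj_apply]
      obtain ⟨g, hgL, hgeq⟩ := hg
      refine Subgroup.mem_map.mpr ⟨xv * g * xv⁻¹, ?_, ?_⟩
      · exact hLnormal.conj_mem g hgL xv
      · rw [map_mul, map_mul, map_inv, hxv, hgeq, ← hf]
        group
    intro v hv
    obtain ⟨x, hxL, hxeq⟩ := Subgroup.mem_map.mp (hsub hv)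
    exact ⟨x, hxL, hxeq⟩
  -- K ≤ L and conclusion
  have hKL : K ≤ L := by
    intro x hx
    have hxN : π₂ x ∈ N := Subgroup.mem_comap.mp (by rw [← hKdef]; exact hx)
    obtain ⟨y, hyL, hyeq⟩ := hNmap (π₂ x) hxN
    have h1 : π₂ (y⁻¹ * x) = 1 := by rw [map_mul, map_inv, hyeq]; group
    have h2 := hkerπ₂ _ h1
    have h3 := L.mul_mem hyL h2
    simpa [← mul_assoc] using h3
  have hKLeq : K = L := le_antisymm hKL hLK
  -- assemble
  have hPiker : (π.comp π₂).ker = L := by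
    rw [← hKLeq, hKdef]
    ext x
    simp only [MonoidHom.mem_ker, MonoidHom.comp_apply, Subgroup.mem_comap, hπdef,
      QuotientGroup.mk'_apply]
    exact QuotientGroup.eq_one_iff _
  have hPirange : (π.comp π₂).range = V' := by
    ext v
    constructor
    · rintro ⟨x, rfl⟩
      exact Subgroup.mem_comap.mp (hmemVb x)
    · intro hv
      obtain ⟨fx, hfx⟩ := hπ v
      have hfVb : fx ∈ Vb := by rw [hVb, Subgroup.mem_comap, hfx]; exact hv
      obtain ⟨x, hx⟩ := hrange fx hfVb
      exact ⟨x, by rw [MonoidHom.comp_apply, hx, hfx]⟩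
  have iso1 : V' ≃* (π.comp π₂).range := MulEquiv.subgroupCongr hPirange.symm
  have iso2 := QuotientGroup.quotientKerEquivRange (π.comp π₂)
  have hPiker' : (π.comp π₂).ker
      = lpresKernel (Qhat : Set _) (Rhat : Set _) (Φhat : Set _) := by
    rw [hPiker, hLdef]
  have iso3 : (FreeGroup (Fin mY ⊕ Fin mZ) ⧸ (π.comp π₂).ker)
      ≃* FreeGroup (Fin mY ⊕ Fin mZ) ⧸ lpresKernel (Qhat : Set _) (Rhat : Set _) (Φhat : Set _) :=
    QuotientGroup.quotientMulEquivOfEq hPiker'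
  exact isFinitelyLPresented_of Qhat Rhat Φhat ⟨(iso1.trans iso2.symm).trans iso3⟩

/-- Proposition 6.3: every subgroup of finite index in an invariantly finitely
`L`-presented group is finitely `L`-presented. -/
theorem finiteIndex_subgroup_of_invariantly_isFinitelyLPresented
    {G : Type*} [Group G] (hG : IsInvariantlyFinitelyLPresented G)
    (U : Subgroup G) (hU : U.FiniteIndex) :
    IsFinitelyLPresented U := by
  obtain ⟨n, Q, R, Φ, hinv, ⟨e⟩⟩ := hG
  haveI : (lpresKernel (X := Fin n) (Q : Set _) (R : Set _) (Φ : Set _)).Normal :=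
    lpresKernel_normal _ _ _
  have hfi : (U.map (e : G →* FreeGroup (Fin n) ⧸ lpresKernel (Q : Set _) (R : Set _)
      (Φ : Set _))).FiniteIndex := by
    constructor
    rw [Subgroup.map_equiv_eq_comap_symm, Subgroup.index_comap_of_surjective _ e.symm.surjective]
    exact hU.index_ne_zero
  have hV' := main_aux Q R Φ rfl hinv _ hfi
  exact isFinitelyLPresented_of_mulEquiv (e.subgroupMap U) hV'
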